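/- Let H be a Hilbert space, T : H → H a compact self-adjoint operator, and T_h a sequence of compact self-adjoint operators with ‖T − T_h‖ → 0. Then for each nonzero eigenvalue μ of T, the spectral projections converge: the gap between the eigenspace E = ker(T − μI) and the span E_h of eigenvectors of T_h with eigenvalues converging to μ tends to zero. -/

import Mathlib

open Filter

/-- The gap `δ(E,F)` between two subsets of a normed space:
`max( sup_{u∈E,‖u‖=1} dist(u,F), sup_{u∈F,‖u‖=1} dist(u,E) )`. -/
noncomputable def subspaceGap {H : Type*} [NormedAddCommGroup H] (E F : Set H) : ℝ :=
  max (⨆ u : {u : H // u ∈ E ∧ ‖u‖ = 1}, Metric.infDist (u : H) F)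
      (⨆ u : {u : H // u ∈ F ∧ ‖u‖ = 1}, Metric.infDist (u : H) E)

section BabuskaOsbornAux

open Metric Module
open scoped Pointwise
local notation "⟪" x ", " y "⟫_ℝ" => @inner ℝ _ _ x y

set_option linter.unusedSectionVars false

variable {K : Type*} [NormedAddCommGroup K] [InnerProductSpace ℝ K]

lemma aux_norm_le_norm_add_of_inner_zero {a b : K} (h : ⟪a, b⟫_ℝ = 0) : ‖b‖ ≤ ‖a + b‖ := by
  have h2 : ‖a + b‖ ^ 2 = ‖a‖ ^ 2 + ‖b‖ ^ 2 := by
    rw [norm_add_sq_real, h]; ring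
  have : ‖b‖ ^ 2 ≤ ‖a + b‖ ^ 2 := by nlinarith [sq_nonneg ‖a‖]
  exact le_of_pow_le_pow_left₀ two_ne_zero (norm_nonneg _) this

lemma aux_opnorm_bound (A : K →L[ℝ] K) (hA : (A : K →ₗ[ℝ] K).IsSymmetric)
    {S : ℝ} (hS : 0 ≤ S) (h : ∀ x : K, |⟪A x, x⟫_ℝ| ≤ S * ‖x‖ ^ 2) :
    ∀ x : K, ‖A x‖ ≤ S * ‖x‖ := by
  intro x
  by_cases hAx : A x = 0
  · rw [hAx, norm_zero]; positivity
  have hx : x ≠ 0 := by rintro rfl; simp at hAx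
  have hxn : (0:ℝ) < ‖x‖ := norm_pos_iff.mpr hx
  have hAxn : (0:ℝ) < ‖A x‖ := norm_pos_iff.mpr hAx
  set y : K := (‖x‖ / ‖A x‖) • A x with hy
  have hyn : ‖y‖ = ‖x‖ := by
    rw [hy, norm_smul]
    rw [Real.norm_eq_abs, abs_of_nonneg (by positivity)]
    field_simp
  have hsym : ⟪A y, x⟫_ℝ = ⟪A x, y⟫_ℝ := by
    have h1 := hA y x
    simp only [ContinuousLinearMap.coe_coe] at h1
    rw [h1, real_inner_comm]
  have hkey : 4 * ⟪A x, y⟫_ℝ = ⟪A (x + y), x + y⟫_ℝ - ⟪A (x - y), x - y⟫_ℝ := by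
    simp only [map_add, map_sub, inner_add_left, inner_add_right, inner_sub_left,
      inner_sub_right]
    linarith [hsym]
  have hpar : ‖x + y‖ ^ 2 + ‖x - y‖ ^ 2 = 4 * ‖x‖ ^ 2 := by
    have := parallelogram_law_with_norm ℝ x y
    nlinarith [hyn]
  have hb : 4 * ⟪A x, y⟫_ℝ ≤ 4 * (S * ‖x‖ ^ 2) := by
    rw [hkey]
    have h1 := h (x + y)
    have h2 := h (x - y)
    have := abs_le.mp h1
    have := abs_le.mp h2
    nlinarith [abs_le.mp h1, abs_le.mp h2]
  have hinner : ⟪A x, y⟫_ℝ = ‖x‖ * ‖A x‖ := by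
    rw [hy, real_inner_smul_right, real_inner_self_eq_norm_sq]
    field_simp
  rw [hinner] at hb
  have : ‖x‖ * ‖A x‖ ≤ S * ‖x‖ ^ 2 := by linarith
  nlinarith [this, hxn]


lemma aux_exists_eigenvector_of_approx (A : K →L[ℝ] K) (hAc : IsCompactOperator ⇑A)
    {z : ℝ} (hz : z ≠ 0) (x : ℕ → K) (hx : ∀ j, ‖x j‖ = 1)
    (h : Tendsto (fun j => ‖A (x j) - z • x j‖) atTop (nhds 0)) :
    ∃ v : K, v ≠ 0 ∧ A v = z • v := by
  obtain ⟨C, hC, hCsub⟩ := hAc.image_closedBall_subset_compact (1 : ℝ)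
  have hmem : ∀ j, A (x j) ∈ C := fun j =>
    hCsub ⟨x j, by simp [mem_closedBall_zero_iff, (hx j).le], rfl⟩
  obtain ⟨v, -, φ, hφ, hconv⟩ := hC.tendsto_subseq hmem
  have hφt : Tendsto φ atTop atTop := hφ.tendsto_atTop
  have herr : Tendsto (fun j => A (x (φ j)) - z • x (φ j)) atTop (nhds 0) := by
    rw [tendsto_zero_iff_norm_tendsto_zero]
    exact (h.comp hφt)
  have hxconv : Tendsto (fun j => x (φ j)) atTop (nhds (z⁻¹ • v)) := by
    have : ∀ j, x (φ j) = z⁻¹ • (A (x (φ j)) - (A (x (φ j)) - z • x (φ j))) := by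
      intro j; rw [sub_sub_cancel, inv_smul_smul₀ hz]
    rw [funext this]
    simpa using ((hconv.sub herr).const_smul z⁻¹)
  refine ⟨z⁻¹ • v, ?_, ?_⟩
  · have hn : Tendsto (fun j => ‖x (φ j)‖) atTop (nhds ‖z⁻¹ • v‖) := hxconv.norm
    simp only [hx] at hn
    have : ‖z⁻¹ • v‖ = 1 := tendsto_nhds_unique hn (tendsto_const_nhds : Tendsto (fun _ : ℕ => (1:ℝ)) atTop (nhds 1))
    intro h0; rw [h0, norm_zero] at this; norm_num at this
  · have hA1 : Tendsto (fun j => A (x (φ j))) atTop (nhds (A (z⁻¹ • v))) :=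
      (A.continuous.tendsto _).comp hxconv
    have : A (z⁻¹ • v) = v := tendsto_nhds_unique hA1 hconv
    rw [this, smul_inv_smul₀ hz]

lemma aux_exists_eigenvector [Nontrivial K] (A : K →L[ℝ] K)
    (hA : (A : K →ₗ[ℝ] K).IsSymmetric) (hAc : IsCompactOperator ⇑A) :
    ∃ z : ℝ, ∃ v : K, v ≠ 0 ∧ A v = z • v := by
  by_cases hA0 : A = 0
  · obtain ⟨v, hv⟩ := exists_ne (0 : K)
    exact ⟨0, v, hv, by simp [hA0]⟩
  have hn : (0:ℝ) < ‖A‖ := norm_pos_iff.mpr hA0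
  -- construct approximate maximizers of |⟪Ax,x⟫| on the unit sphere
  have hseq : ∀ j : ℕ, ∃ x : K, ‖x‖ = 1 ∧ ‖A‖ - 1/(j+1) < |⟪A x, x⟫_ℝ| := by
    intro j
    by_contra hcon
    push_neg at hcon
    set S : ℝ := max 0 (‖A‖ - 1/(j+1)) with hS
    have hSnn : 0 ≤ S := le_max_left _ _
    have hb : ∀ y : K, |⟪A y, y⟫_ℝ| ≤ S * ‖y‖ ^ 2 := by
      intro y
      by_cases hy : y = 0
      · simp [hy]
      · have hyn : (0:ℝ) < ‖y‖ := norm_pos_iff.mpr hy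
        have h1 : ‖(‖y‖⁻¹ • y)‖ = 1 := by
          rw [norm_smul, Real.norm_eq_abs, abs_of_nonneg (by positivity)]; field_simp
        have h2 := hcon _ h1
        have h3 : |⟪A (‖y‖⁻¹ • y), (‖y‖⁻¹ • y)⟫_ℝ| = ‖y‖⁻¹ ^ 2 * |⟪A y, y⟫_ℝ| := by
          rw [map_smul, real_inner_smul_left, real_inner_smul_right, ← mul_assoc, abs_mul,
            abs_mul, abs_of_nonneg (a := ‖y‖⁻¹) (by positivity)]
          ring
        rw [h3] at h2
        have h4 : |⟪A y, y⟫_ℝ| ≤ (‖A‖ - 1/(j+1)) * ‖y‖ ^ 2 := by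
          have := mul_le_mul_of_nonneg_left h2 (sq_nonneg ‖y‖)
          calc |⟪A y, y⟫_ℝ| = ‖y‖ ^ 2 * (‖y‖⁻¹ ^ 2 * |⟪A y, y⟫_ℝ|) := by
                field_simp
            _ ≤ ‖y‖ ^ 2 * (‖A‖ - 1/(j+1)) := by
                exact mul_le_mul_of_nonneg_left h2 (sq_nonneg ‖y‖)
            _ = (‖A‖ - 1/(j+1)) * ‖y‖ ^ 2 := by ring
        exact h4.trans (by nlinarith [sq_nonneg ‖y‖, le_max_right 0 (‖A‖ - 1/(j+1))])
    have hble := aux_opnorm_bound A hA hSnn hb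
    have : ‖A‖ ≤ S := A.opNorm_le_bound hSnn hble
    have hj : (0:ℝ) < 1/(j+1) := by positivity
    have hle : S ≤ 0 ∨ S = ‖A‖ - 1/(j+1) := by
      rcases max_cases 0 (‖A‖ - 1/(j+1)) with ⟨hSe, -⟩ | ⟨hSe, -⟩
      · left; rw [hS, hSe]
      · right; rw [hS, hSe]
    rcases hle with h' | h' <;> [linarith; (rw [h'] at this; linarith)]
  choose x hx1 hx2 using hseq
  set a : ℕ → ℝ := fun j => ⟪A (x j), x j⟫_ℝ with ha
  have haIcc : ∀ j, a j ∈ Set.Icc (-‖A‖) ‖A‖ := by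
    intro j
    rw [Set.mem_Icc, ← abs_le]
    calc |a j| ≤ ‖A (x j)‖ * ‖x j‖ := abs_real_inner_le_norm _ _
      _ ≤ ‖A‖ * ‖x j‖ * ‖x j‖ := by
          exact mul_le_mul_of_nonneg_right (A.le_opNorm _) (norm_nonneg _)
      _ = ‖A‖ := by rw [hx1]; ring
  obtain ⟨lam, -, φ, hφ, hconv⟩ := isCompact_Icc.tendsto_subseq haIcc
  have hlam_le : |lam| ≤ ‖A‖ := by
    have h1 : Tendsto (fun j => |a (φ j)|) atTop (nhds |lam|) := hconv.abs
    refine le_of_tendsto h1 (Eventually.of_forall fun j => ?_)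
    rw [abs_le, ← Set.mem_Icc]; exact haIcc _
  have hlam_ge : ‖A‖ ≤ |lam| := by
    have h1 : Tendsto (fun j => |a (φ j)|) atTop (nhds |lam|) := hconv.abs
    have h2 : Tendsto (fun j : ℕ => ‖A‖ - 1/(j+1)) atTop (nhds ‖A‖) := by
      have := tendsto_one_div_add_atTop_nhds_zero_nat (𝕜 := ℝ)
      have h3 := (tendsto_const_nhds : Tendsto (fun _ : ℕ => ‖A‖) atTop (nhds ‖A‖)).sub this
      simpa using h3
    refine le_of_tendsto_of_tendsto' h2 h1 fun j => ?_
    have hmono : (j:ℝ) + 1 ≤ (φ j : ℝ) + 1 := by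
      have : (j:ℝ) ≤ (φ j : ℝ) := by exact_mod_cast hφ.le_apply
      linarith
    have : 1/((φ j : ℝ)+1) ≤ 1/((j:ℝ)+1) := by
      apply one_div_le_one_div_of_le (by positivity) hmono
    linarith [(hx2 (φ j)), this]
  have hlam0 : lam ≠ 0 := by intro h0; rw [h0, abs_zero] at hlam_ge; linarith
  have herr : Tendsto (fun j => ‖A (x (φ j)) - lam • x (φ j)‖) atTop (nhds 0) := by
    have hbound : ∀ j, ‖A (x (φ j)) - lam • x (φ j)‖ ≤
        Real.sqrt (‖A‖^2 - (a (φ j))^2) + |a (φ j) - lam| := by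
      intro j
      have hsq : ‖A (x (φ j)) - a (φ j) • x (φ j)‖^2 = ‖A (x (φ j))‖^2 - (a (φ j))^2 := by
        rw [norm_sub_sq_real]
        rw [real_inner_smul_right, norm_smul, Real.norm_eq_abs]
        rw [hx1]
        have : ⟪A (x (φ j)), x (φ j)⟫_ℝ = a (φ j) := rfl
        rw [this]
        rw [mul_one]; rw [sq_abs]; ring
      have h5 : ‖A (x (φ j)) - a (φ j) • x (φ j)‖ ≤ Real.sqrt (‖A‖^2 - (a (φ j))^2) := by
        rw [← Real.sqrt_sq (norm_nonneg (A (x (φ j)) - a (φ j) • x (φ j)))]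
        apply Real.sqrt_le_sqrt
        rw [hsq]
        have : ‖A (x (φ j))‖ ≤ ‖A‖ := by
          have := A.le_opNorm (x (φ j)); rw [hx1] at this; simpa using this
        nlinarith [norm_nonneg (A (x (φ j)))]
      calc ‖A (x (φ j)) - lam • x (φ j)‖
          ≤ ‖A (x (φ j)) - a (φ j) • x (φ j)‖ + ‖(a (φ j) - lam) • x (φ j)‖ := by
            rw [← sub_add_sub_cancel (A (x (φ j))) (a (φ j) • x (φ j)) (lam • x (φ j))]
            refine (norm_add_le _ _).trans ?_
            have : a (φ j) • x (φ j) - lam • x (φ j) = (a (φ j) - lam) • x (φ j) := by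
              rw [sub_smul]
            rw [this]
        _ ≤ Real.sqrt (‖A‖^2 - (a (φ j))^2) + |a (φ j) - lam| := by
            rw [norm_smul, Real.norm_eq_abs, hx1, mul_one]
            exact add_le_add h5 le_rfl
    have hgoal0 : Tendsto (fun j => Real.sqrt (‖A‖^2 - (a (φ j))^2) + |a (φ j) - lam|)
        atTop (nhds 0) := by
      have h1 : Tendsto (fun j => ‖A‖^2 - (a (φ j))^2) atTop (nhds (‖A‖^2 - lam^2)) :=
        tendsto_const_nhds.sub (hconv.pow 2)
      have hlam2 : ‖A‖^2 - lam^2 = 0 := by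
        have : |lam| = ‖A‖ := le_antisymm hlam_le hlam_ge
        rw [← this, sq_abs]; ring
      rw [hlam2] at h1
      have h2 : Tendsto (fun j => Real.sqrt (‖A‖^2 - (a (φ j))^2)) atTop (nhds 0) := by
        have := (Real.continuous_sqrt.tendsto 0).comp h1
        simpa [Function.comp_def] using this
      have h3 : Tendsto (fun j => |a (φ j) - lam|) atTop (nhds 0) := by
        have := (hconv.sub (tendsto_const_nhds : Tendsto (fun _ : ℕ => lam) atTop (nhds lam))).abs
        simpa using this
      simpa using h2.add h3
    exact squeeze_zero (fun j => norm_nonneg _) hbound hgoal0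
  obtain ⟨v, hv0, hv⟩ := aux_exists_eigenvector_of_approx A hAc hlam0 (fun j => x (φ j))
    (fun j => hx1 (φ j)) herr
  exact ⟨lam, v, hv0, hv⟩

section RestrictCLM

/-- Restriction of a continuous linear endomorphism to an invariant submodule. -/
noncomputable def restrictCLM (A : K →L[ℝ] K) (W : Submodule ℝ K)
    (h : ∀ x ∈ W, A x ∈ W) : ↥W →L[ℝ] ↥W :=
  LinearMap.mkContinuous ((A : K →ₗ[ℝ] K).restrict h) ‖A‖ fun x => by
    have h1 : ‖(A : K →ₗ[ℝ] K).restrict h x‖ = ‖A (x : K)‖ := rfl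
    rw [h1]
    exact (A.le_opNorm _).trans (le_of_eq rfl)

@[simp] lemma restrictCLM_apply_coe (A : K →L[ℝ] K) (W : Submodule ℝ K)
    (h : ∀ x ∈ W, A x ∈ W) (x : ↥W) : ((restrictCLM A W h) x : K) = A (x : K) := rfl

lemma restrictCLM_isSymmetric (A : K →L[ℝ] K) (hA : (A : K →ₗ[ℝ] K).IsSymmetric)
    (W : Submodule ℝ K) (h : ∀ x ∈ W, A x ∈ W) :
    ((restrictCLM A W h : ↥W →L[ℝ] ↥W) : ↥W →ₗ[ℝ] ↥W).IsSymmetric := by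
  intro x y
  have h1 := hA (x : K) (y : K)
  simp only [ContinuousLinearMap.coe_coe] at h1 ⊢
  exact h1

lemma restrictCLM_isCompact (A : K →L[ℝ] K) (hAc : IsCompactOperator ⇑A)
    (W : Submodule ℝ K) (hW : IsClosed (W : Set K)) (h : ∀ x ∈ W, A x ∈ W) :
    IsCompactOperator ⇑(restrictCLM A W h) := by
  have h1 : IsCompactOperator ⇑((A : K →ₗ[ℝ] K).restrict h) :=
    IsCompactOperator.restrict (f := (A : K →ₗ[ℝ] K)) hAc h hW
  exact h1

end RestrictCLM

section Bound

variable [CompleteSpace K]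

lemma aux_eigenspaces_dense (A : K →L[ℝ] K) (hA : (A : K →ₗ[ℝ] K).IsSymmetric)
    (hAc : IsCompactOperator ⇑A) :
    (⨆ z : ℝ, Module.End.eigenspace (A : K →ₗ[ℝ] K) z)ᗮ = ⊥ := by
  set D := ⨆ z : ℝ, Module.End.eigenspace (A : K →ₗ[ℝ] K) z with hD
  by_contra hbot
  have hnt : Nontrivial ↥(Dᗮ) := Submodule.nontrivial_iff_ne_bot.mpr hbot
  have hInv : ∀ x ∈ Dᗮ, A x ∈ Dᗮ := fun x hx =>
    hA.orthogonalComplement_iSup_eigenspaces_invariant hx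
  haveI : CompleteSpace ↥(Dᗮ) := D.isClosed_orthogonal.completeSpace_coe
  set B := restrictCLM A Dᗮ hInv with hB
  obtain ⟨z, v, hv0, hv⟩ := aux_exists_eigenvector B
    (restrictCLM_isSymmetric A hA Dᗮ hInv)
    (restrictCLM_isCompact A hAc Dᗮ D.isClosed_orthogonal hInv)
  have hcoe : A (v : K) = z • (v : K) := by
    have := congrArg (Subtype.val) hv
    simpa [hB] using this
  have hvD : (v : K) ∈ D := by
    have hle : Module.End.eigenspace (A : K →ₗ[ℝ] K) z ≤ D := le_iSup _ z
    exact hle (Module.End.mem_eigenspace_iff.mpr hcoe)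
  have hvDperp : (v : K) ∈ Dᗮ := v.2
  have : (v : K) = 0 := by
    have := hvDperp (v : K) hvD
    exact inner_self_eq_zero.mp this
  exact hv0 (Subtype.coe_injective (by simpa using this))

lemma aux_eigen_sum_norms {ι : Type*} (A : K →L[ℝ] K) (hA : (A : K →ₗ[ℝ] K).IsSymmetric)
    {g : ι → ℝ} (hg : Function.Injective g) (μ : ℝ) (f : ι →₀ K)
    (hf : ∀ i, f i ∈ Module.End.eigenspace (A : K →ₗ[ℝ] K) (g i)) :
    ‖f.sum fun _ v => v‖ ^ 2 = ∑ i ∈ f.support, ‖f i‖ ^ 2 ∧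
    ‖A (f.sum fun _ v => v) - μ • (f.sum fun _ v => v)‖ ^ 2
      = ∑ i ∈ f.support, (g i - μ) ^ 2 * ‖f i‖ ^ 2 := by
  have hofam := hA.orthogonalFamily_eigenspaces.comp hg
  have heig : ∀ i, A (f i) = g i • f i := fun i => by
    have := Module.End.mem_eigenspace_iff.mp (hf i)
    simpa using this
  constructor
  · have h1 : (f.sum fun _ v => v) = ∑ i ∈ f.support,
        ((Module.End.eigenspace (A : K →ₗ[ℝ] K) (g i)).subtypeₗᵢ) ⟨f i, hf i⟩ := by
      rw [Finsupp.sum]; rfl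
    rw [h1, hofam.norm_sum]
    rfl
  · have h2 : A (f.sum fun _ v => v) - μ • (f.sum fun _ v => v)
        = ∑ i ∈ f.support,
          ((Module.End.eigenspace (A : K →ₗ[ℝ] K) (g i)).subtypeₗᵢ) ((g i - μ) • ⟨f i, hf i⟩) := by
      rw [Finsupp.sum, map_sum, Finset.smul_sum, ← Finset.sum_sub_distrib]
      refine Finset.sum_congr rfl fun i _ => ?_
      have : ((Module.End.eigenspace (A : K →ₗ[ℝ] K) (g i)).subtypeₗᵢ)
          ((g i - μ) • (⟨f i, hf i⟩ : ↥(Module.End.eigenspace (A : K →ₗ[ℝ] K) (g i))))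
          = (g i - μ) • f i := rfl
      rw [this, heig i, sub_smul]
    rw [h2, hofam.norm_sum]
    refine Finset.sum_congr rfl fun i _ => ?_
    have : ‖((g i - μ) • (⟨f i, hf i⟩ : ↥(Module.End.eigenspace (A : K →ₗ[ℝ] K) (g i))))‖
        = |g i - μ| * ‖f i‖ := by
      rw [norm_smul, Real.norm_eq_abs]; rfl
    rw [this, mul_pow, sq_abs]

lemma aux_bound_of_eigenvalue_gap (A : K →L[ℝ] K) (hA : (A : K →ₗ[ℝ] K).IsSymmetric)
    (hAc : IsCompactOperator ⇑A) (μ c : ℝ) (hc : 0 ≤ c)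
    (h : ∀ z : ℝ, ∀ x : K, x ≠ 0 → A x = z • x → c ≤ |z - μ|) :
    ∀ x : K, c * ‖x‖ ≤ ‖A x - μ • x‖ := by
  set D := ⨆ z : ℝ, Module.End.eigenspace (A : K →ₗ[ℝ] K) z with hD
  have hdense : closure (D : Set K) = Set.univ := by
    have h1 : D.topologicalClosure = ⊤ := by
      rw [← Submodule.orthogonal_orthogonal_eq_closure, aux_eigenspaces_dense A hA hAc,
        Submodule.bot_orthogonal_eq_top]
    have := congrArg (fun S : Submodule ℝ K => (S : Set K)) h1
    simpa [Submodule.topologicalClosure_coe] using this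
  set C : Set K := {x : K | c * ‖x‖ ≤ ‖A x - μ • x‖} with hC
  have hCclosed : IsClosed C := by
    apply isClosed_le
    · exact (continuous_const.mul continuous_norm)
    · exact ((A.continuous.sub (continuous_id.const_smul μ)).norm)
  have hDC : (D : Set K) ⊆ C := by
    intro x hx
    rw [SetLike.mem_coe, hD, Submodule.mem_iSup_iff_exists_finsupp] at hx
    obtain ⟨f, hf, hsum⟩ := hx
    obtain ⟨hn1, hn2⟩ := aux_eigen_sum_norms A hA (g := id) Function.injective_id μ f hf
    rw [hsum] at hn1 hn2
    have hsumle : ∑ i ∈ f.support, c^2 * ‖f i‖ ^ 2 ≤ ∑ i ∈ f.support, (i - μ)^2 * ‖f i‖^2 := by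
      refine Finset.sum_le_sum fun i hi => ?_
      have hfi0 : f i ≠ 0 := Finsupp.mem_support_iff.mp hi
      have heig : A (f i) = i • f i := by
        have := Module.End.mem_eigenspace_iff.mp (hf i)
        simpa using this
      have := h i (f i) hfi0 heig
      have h2 : c^2 ≤ (i - μ)^2 := by
        rw [← sq_abs (i - μ)]
        exact pow_le_pow_left₀ hc this 2
      exact mul_le_mul_of_nonneg_right h2 (sq_nonneg _)
    have hsq : (c * ‖x‖)^2 ≤ ‖A x - μ • x‖^2 := by
      rw [mul_pow, hn2]
      calc c^2 * ‖x‖^2 = ∑ i ∈ f.support, c^2 * ‖f i‖^2 := by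
            rw [hn1, Finset.mul_sum]
        _ ≤ _ := by simpa using hsumle
    exact le_of_pow_le_pow_left₀ two_ne_zero (norm_nonneg _) hsq
  intro x
  have : x ∈ C := by
    have hxcl : x ∈ closure (D : Set K) := by rw [hdense]; trivial
    exact (hCclosed.closure_subset_iff.mpr hDC) hxcl
  exact this

lemma aux_bound_on_invariant (A : K →L[ℝ] K) (hA : (A : K →ₗ[ℝ] K).IsSymmetric)
    (hAc : IsCompactOperator ⇑A) (W : Submodule ℝ K) (hW : IsClosed (W : Set K))
    (hInv : ∀ x ∈ W, A x ∈ W) (μ c : ℝ) (hc : 0 ≤ c)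
    (h : ∀ z : ℝ, ∀ x ∈ W, x ≠ 0 → A x = z • x → c ≤ |z - μ|) :
    ∀ x ∈ W, c * ‖x‖ ≤ ‖A x - μ • x‖ := by
  haveI : CompleteSpace ↥W := hW.completeSpace_coe
  set B := restrictCLM A W hInv with hB
  have hbd := aux_bound_of_eigenvalue_gap B (restrictCLM_isSymmetric A hA W hInv)
    (restrictCLM_isCompact A hAc W hW hInv) μ c hc ?_
  · intro x hx
    have := hbd ⟨x, hx⟩
    have hn1 : ‖(⟨x, hx⟩ : ↥W)‖ = ‖x‖ := rfl
    have hn2 : ‖B ⟨x, hx⟩ - μ • (⟨x, hx⟩ : ↥W)‖ = ‖A x - μ • x‖ := rfl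
    rwa [hn1, hn2] at this
  · intro z v hv0 hv
    have hcoe : A (v : K) = z • (v : K) := by
      have := congrArg Subtype.val hv; simpa [hB] using this
    exact h z (v : K) v.2 (fun h0 => hv0 (Subtype.coe_injective (by simpa using h0))) hcoe

end Bound

lemma aux_eigenspace_isClosed (A : K →L[ℝ] K) (z : ℝ) :
    IsClosed ((Module.End.eigenspace (A : K →ₗ[ℝ] K) z : Submodule ℝ K) : Set K) := by
  have h1 : ((Module.End.eigenspace (A : K →ₗ[ℝ] K) z : Submodule ℝ K) : Set K)
      = (fun x => A x - z • x) ⁻¹' {0} := by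
    ext x
    simp only [SetLike.mem_coe, Module.End.mem_eigenspace_iff, Set.mem_preimage,
      Set.mem_singleton_iff, sub_eq_zero, ContinuousLinearMap.coe_coe]
  rw [h1]
  exact IsClosed.preimage (A.continuous.sub (continuous_id.const_smul z)) isClosed_singleton

lemma aux_finiteDimensional_eigenspace (A : K →L[ℝ] K) (hAc : IsCompactOperator ⇑A)
    {z : ℝ} (hz : z ≠ 0) :
    FiniteDimensional ℝ ↥(Module.End.eigenspace (A : K →ₗ[ℝ] K) z) := by
  set Es := Module.End.eigenspace (A : K →ₗ[ℝ] K) z with hEs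
  obtain ⟨C, hC, hCsub⟩ := hAc.image_closedBall_subset_compact (1 : ℝ)
  have hC' : IsCompact (z⁻¹ • C) := hC.smul z⁻¹
  have hsub : Metric.closedBall (0 : ↥Es) 1 ⊆ (Subtype.val) ⁻¹' (z⁻¹ • C) := by
    intro x hx
    have hxn : ‖(x : K)‖ ≤ 1 := by
      have := mem_closedBall_zero_iff.mp hx
      exact this
    have heig : A (x : K) = z • (x : K) := by
      have := Module.End.mem_eigenspace_iff.mp x.2
      simpa using this
    have h1 : A (x : K) ∈ C := hCsub ⟨(x : K), mem_closedBall_zero_iff.mpr hxn, rfl⟩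
    have h2 : (x : K) = z⁻¹ • A (x : K) := by rw [heig, inv_smul_smul₀ hz]
    rw [Set.mem_preimage, h2]
    exact Set.smul_mem_smul_set h1
  have hpre : IsCompact ((Subtype.val : ↥Es → K) ⁻¹' (z⁻¹ • C)) :=
    (aux_eigenspace_isClosed A z).isClosedEmbedding_subtypeVal.isCompact_preimage hC'
  have hball : IsCompact (Metric.closedBall (0 : ↥Es) 1) :=
    IsCompact.of_isClosed_subset hpre Metric.isClosed_closedBall hsub
  exact FiniteDimensional.of_isCompact_closedBall₀ ℝ (by norm_num : (0:ℝ) < 1) hball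

lemma aux_orthogonal_invariant (A : K →L[ℝ] K) (hA : (A : K →ₗ[ℝ] K).IsSymmetric)
    (U : Submodule ℝ K) (h : ∀ x ∈ U, A x ∈ U) :
    ∀ x ∈ Uᗮ, A x ∈ Uᗮ := by
  intro x hx
  rw [Submodule.mem_orthogonal] at hx ⊢
  intro u hu
  have h1 := hA u x
  simp only [ContinuousLinearMap.coe_coe] at h1
  rw [← h1]
  exact hx (A u) (h u hu)

lemma aux_norm_le_of_orth {U : Submodule ℝ K} {a b : K} (ha : a ∈ U) (hb : b ∈ Uᗮ) :
    ‖b‖ ≤ ‖a + b‖ := by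
  have h : ⟪a, b⟫_ℝ = 0 := (Submodule.mem_orthogonal U b).mp hb a ha
  have h2 : ‖a + b‖ ^ 2 = ‖a‖ ^ 2 + ‖b‖ ^ 2 := by
    rw [norm_add_sq_real, h]; ring
  have : ‖b‖ ^ 2 ≤ ‖a + b‖ ^ 2 := by nlinarith [sq_nonneg ‖a‖]
  exact le_of_pow_le_pow_left₀ two_ne_zero (norm_nonneg _) this


end BabuskaOsbornAux

/-- Babuška–Osborn eigenfunction convergence: if compact self-adjoint `T_n → T` in
operator norm and `μ ≠ 0` is an (isolated, as eigenvalues of self-adjoint compact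
operators are) eigenvalue of `T`, then the gap between the eigenspace
`E = ker(T − μI)` and the span `E_n` of the eigenspaces of `T_n` associated with its
eigenvalues converging to `μ` tends to zero. -/
theorem stmt14 {H : Type*} [NormedAddCommGroup H] [InnerProductSpace ℝ H]
    [CompleteSpace H]
    (T : H →L[ℝ] H) (Tn : ℕ → H →L[ℝ] H)
    (hT : IsSelfAdjoint T) (hTc : IsCompactOperator T)
    (hTnsa : ∀ k, IsSelfAdjoint (Tn k)) (hTnc : ∀ k, IsCompactOperator (Tn k))
    (hconv : Tendsto (fun k => ‖T - Tn k‖) atTop (nhds 0))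
    (μ : ℝ) (hμ0 : μ ≠ 0) (hμ : Module.End.HasEigenvalue (T : H →ₗ[ℝ] H) μ)
    (r : ℝ) (hr : 0 < r)
    (hiso : ∀ z : ℝ, Module.End.HasEigenvalue (T : H →ₗ[ℝ] H) z → |z - μ| < r → z = μ)
    (ν : ℕ → Finset ℝ)
    (hν1 : ∀ k, ∀ z ∈ ν k, Module.End.HasEigenvalue ((Tn k : H →ₗ[ℝ] H)) z)
    (hν2 : ∀ ε > 0, ∀ᶠ k in atTop, ∀ z ∈ ν k, |z - μ| < ε)
    (hν3 : ∀ᶠ k in atTop, ∀ z : ℝ,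
      Module.End.HasEigenvalue ((Tn k : H →ₗ[ℝ] H)) z → |z - μ| < r → z ∈ ν k) :
    Tendsto (fun k => subspaceGap
        ((Module.End.eigenspace (T : H →ₗ[ℝ] H) μ : Submodule ℝ H) : Set H)
        ((⨆ z ∈ ν k, Module.End.eigenspace ((Tn k : H →ₗ[ℝ] H)) z : Submodule ℝ H) : Set H))
      atTop (nhds 0) := by
  classical
  have hTsym : (T : H →ₗ[ℝ] H).IsSymmetric :=
    ContinuousLinearMap.isSelfAdjoint_iff_isSymmetric.mp hT
  have hTnsym : ∀ k, ((Tn k : H →ₗ[ℝ] H)).IsSymmetric := fun k =>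
    ContinuousLinearMap.isSelfAdjoint_iff_isSymmetric.mp (hTnsa k)
  set c : ℝ := r / 2 with hc
  have hcpos : 0 < c := by rw [hc]; linarith
  set E := Module.End.eigenspace (T : H →ₗ[ℝ] H) μ with hE
  have hEclosed : IsClosed (E : Set H) := aux_eigenspace_isClosed T μ
  haveI : CompleteSpace ↥E := hEclosed.completeSpace_coe
  have hEinv : ∀ x ∈ E, T x ∈ E := by
    intro x hx
    have h1 := Module.End.mem_eigenspace_iff.mp hx
    simp only [ContinuousLinearMap.coe_coe] at h1
    rw [hE, Module.End.mem_eigenspace_iff]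
    simp only [ContinuousLinearMap.coe_coe]
    rw [h1, map_smul, h1]
  have hEperpinv := aux_orthogonal_invariant T hTsym E hEinv
  have hboundE : ∀ w ∈ Eᗮ, c * ‖w‖ ≤ ‖T w - μ • w‖ := by
    apply aux_bound_on_invariant T hTsym hTc Eᗮ E.isClosed_orthogonal hEperpinv μ c hcpos.le
    intro z x hxW hx0 hxeig
    by_contra hlt
    push_neg at hlt
    have hzr : |z - μ| < r := hlt.trans_le (by rw [hc]; linarith)
    have hmem : x ∈ Module.End.eigenspace (T : H →ₗ[ℝ] H) z :=
      Module.End.mem_eigenspace_iff.mpr (by simpa using hxeig)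
    have hev : Module.End.HasEigenvalue (T : H →ₗ[ℝ] H) z :=
      Module.End.hasEigenvalue_of_hasEigenvector ⟨hmem, hx0⟩
    have hzμ := hiso z hev hzr
    have hxE : x ∈ E := by rw [hE, ← hzμ]; exact hmem
    have : @inner ℝ _ _ x x = 0 := (Submodule.mem_orthogonal E x).mp hxW x hxE
    exact hx0 (inner_self_eq_zero.mp this)
  -- main tendsto
  rw [Metric.tendsto_nhds]
  intro ε hε
  have habsμ : 0 < |μ| := abs_pos.mpr hμ0
  have hδpos : 0 < min (c * ε / 4) (|μ| / 2) := by
    apply lt_min (by positivity) (by positivity)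
  have h3 : ∀ᶠ k in atTop, ‖T - Tn k‖ < c * ε / 4 :=
    hconv.eventually (gt_mem_nhds (by positivity))
  filter_upwards [hν2 _ hδpos, hν3, h3] with k hk1 hk2 hk3
  set A := Tn k with hA
  set M := (⨆ z ∈ ν k, Module.End.eigenspace ((A : H →ₗ[ℝ] H)) z) with hM
  have hz0 : ∀ z ∈ ν k, z ≠ 0 := by
    intro z hz h0
    have h1 := (hk1 z hz).trans_le (min_le_right _ _)
    rw [h0, zero_sub, abs_neg] at h1
    linarith
  haveI hfd : ∀ i : {z // z ∈ ν k},
      FiniteDimensional ℝ ↥(Module.End.eigenspace ((A : H →ₗ[ℝ] H)) (i : ℝ)) :=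
    fun i => aux_finiteDimensional_eigenspace A (hTnc k) (hz0 i i.2)
  have hMsub : M = ⨆ i : {z // z ∈ ν k}, Module.End.eigenspace ((A : H →ₗ[ℝ] H)) (i : ℝ) := by
    rw [hM, iSup_subtype]
  haveI : FiniteDimensional ℝ ↥M := by rw [hMsub]; infer_instance
  have hMclosed : IsClosed (M : Set H) := M.closed_of_finiteDimensional
  haveI : CompleteSpace ↥M := hMclosed.completeSpace_coe
  have hMinv : ∀ x ∈ M, A x ∈ M := by
    intro x hx
    rw [hMsub] at hx
    refine Submodule.iSup_induction (motive := fun y => A y ∈ M)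
      (fun i : {z // z ∈ ν k} => Module.End.eigenspace ((A : H →ₗ[ℝ] H)) (i : ℝ)) hx
      ?_ ?_ ?_
    · intro i y hyi
      have heig : A y = (i : ℝ) • y := by
        have := Module.End.mem_eigenspace_iff.mp hyi
        simpa using this
      have hle : Module.End.eigenspace ((A : H →ₗ[ℝ] H)) (i : ℝ) ≤ M := by
        rw [hMsub]
        exact le_iSup (fun j : {z // z ∈ ν k} => Module.End.eigenspace ((A : H →ₗ[ℝ] H)) (j : ℝ)) i
      rw [heig]
      exact hle (Submodule.smul_mem _ _ hyi)
    · simp only [map_zero]; exact M.zero_mem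
    · intro a b ha hb; rw [map_add]; exact M.add_mem ha hb
  have hMperpinv := aux_orthogonal_invariant A (hTnsym k) M hMinv
  have hboundM : ∀ w ∈ Mᗮ, c * ‖w‖ ≤ ‖A w - μ • w‖ := by
    apply aux_bound_on_invariant A (hTnsym k) (hTnc k) Mᗮ M.isClosed_orthogonal
      hMperpinv μ c hcpos.le
    intro z x hxW hx0 hxeig
    by_contra hlt
    push_neg at hlt
    have hzr : |z - μ| < r := hlt.trans_le (by rw [hc]; linarith)
    have hmem : x ∈ Module.End.eigenspace ((A : H →ₗ[ℝ] H)) z :=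
      Module.End.mem_eigenspace_iff.mpr (by simpa using hxeig)
    have hev : Module.End.HasEigenvalue ((A : H →ₗ[ℝ] H)) z :=
      Module.End.hasEigenvalue_of_hasEigenvector ⟨hmem, hx0⟩
    have hzν : z ∈ ν k := hk2 z hev hzr
    have hxM : x ∈ M := by
      have hle : Module.End.eigenspace ((A : H →ₗ[ℝ] H)) z ≤ M := by
        rw [hMsub]
        exact le_iSup (fun j : {z // z ∈ ν k} =>
          Module.End.eigenspace ((A : H →ₗ[ℝ] H)) (j : ℝ)) ⟨z, hzν⟩
      exact hle hmem
    have : @inner ℝ _ _ x x = 0 := (Submodule.mem_orthogonal M x).mp hxW x hxM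
    exact hx0 (inner_self_eq_zero.mp this)
  -- direction 1 : from E to M
  have hdir1 : ∀ u : H, u ∈ E → ‖u‖ = 1 → Metric.infDist u (M : Set H) ≤ ε / 4 := by
    intro u huE hu1
    set P := M.orthogonalProjectionOnto with hP
    set w := u - ↑(P u) with hw
    have hwperp : w ∈ Mᗮ := by exact M.sub_starProjection_mem_orthogonal u
    have hsplit : A u - μ • u = (A ↑(P u) - μ • (↑(P u) : H)) + (A w - μ • w) := by
      rw [hw, map_sub, smul_sub]; abel
    have haM : A ↑(P u) - μ • (↑(P u) : H) ∈ M :=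
      M.sub_mem (hMinv _ (SetLike.coe_mem _)) (M.smul_mem μ (SetLike.coe_mem _))
    have hbM : A w - μ • w ∈ Mᗮ :=
      Mᗮ.sub_mem (hMperpinv w hwperp) (Mᗮ.smul_mem μ hwperp)
    have h5 : ‖A w - μ • w‖ ≤ ‖A u - μ • u‖ := by
      rw [hsplit]; exact aux_norm_le_of_orth haM hbM
    have h6 : ‖A u - μ • u‖ ≤ ‖T - A‖ := by
      have hTu : T u = μ • u := by
        have := Module.End.mem_eigenspace_iff.mp huE
        simpa using this
      have heq : A u - μ • u = -((T - A) u) := by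
        rw [ContinuousLinearMap.sub_apply, hTu]; abel
      rw [heq, norm_neg]
      calc ‖(T - A) u‖ ≤ ‖T - A‖ * ‖u‖ := (T - A).le_opNorm u
        _ = ‖T - A‖ := by rw [hu1, mul_one]
    have h7 := hboundM w hwperp
    have h8 : Metric.infDist u (M : Set H) ≤ ‖w‖ := by
      have hmem : (↑(P u) : H) ∈ (M : Set H) := SetLike.coe_mem _
      have := Metric.infDist_le_dist_of_mem (x := u) hmem
      rwa [dist_eq_norm] at this
    have h9 : c * Metric.infDist u (M : Set H) ≤ c * ‖w‖ :=
      mul_le_mul_of_nonneg_left h8 hcpos.le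
    have h10 : c * Metric.infDist u (M : Set H) ≤ c * (ε / 4) := by
      have : c * Metric.infDist u (M : Set H) < c * ε / 4 := by
        calc c * Metric.infDist u (M : Set H) ≤ ‖T - A‖ := by linarith
          _ < c * ε / 4 := hk3
      linarith
    exact le_of_mul_le_mul_left h10 hcpos
  -- direction 2 : from M to E
  have hdir2 : ∀ u : H, u ∈ M → ‖u‖ = 1 → Metric.infDist u (E : Set H) ≤ ε / 2 := by
    intro u huM hu1
    have hAu : ‖A u - μ • u‖ ≤ c * ε / 4 := by
      rw [hMsub, Submodule.mem_iSup_iff_exists_finsupp] at huM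
      obtain ⟨f, hf, hsum⟩ := huM
      obtain ⟨hn1, hn2⟩ := aux_eigen_sum_norms A (hTnsym k)
        (g := fun i : {z // z ∈ ν k} => (i : ℝ)) Subtype.coe_injective μ f hf
      rw [hsum] at hn1 hn2
      have hb : ∀ i ∈ f.support, ((i : ℝ) - μ) ^ 2 * ‖f i‖ ^ 2
          ≤ (c * ε / 4) ^ 2 * ‖f i‖ ^ 2 := by
        intro i _
        have h1 := (hk1 (i : ℝ) i.2).trans_le (min_le_left _ _)
        have h3 : ((i : ℝ) - μ) ^ 2 ≤ (c * ε / 4) ^ 2 := by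
          rw [← sq_abs]
          exact pow_le_pow_left₀ (abs_nonneg _) h1.le 2
        exact mul_le_mul_of_nonneg_right h3 (sq_nonneg _)
      have hsq : ‖A u - μ • u‖ ^ 2 ≤ (c * ε / 4) ^ 2 := by
        rw [hn2]
        calc ∑ i ∈ f.support, ((i : ℝ) - μ) ^ 2 * ‖f i‖ ^ 2
            ≤ ∑ i ∈ f.support, (c * ε / 4) ^ 2 * ‖f i‖ ^ 2 := Finset.sum_le_sum hb
          _ = (c * ε / 4) ^ 2 * ∑ i ∈ f.support, ‖f i‖ ^ 2 := by rw [Finset.mul_sum]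
          _ = (c * ε / 4) ^ 2 := by rw [← hn1, hu1]; norm_num
      exact le_of_pow_le_pow_left₀ two_ne_zero (by positivity) hsq
    have hTu : ‖T u - μ • u‖ ≤ c * ε / 2 := by
      have heq : T u - μ • u = (T - A) u + (A u - μ • u) := by
        rw [ContinuousLinearMap.sub_apply]; abel
      calc ‖T u - μ • u‖ ≤ ‖(T - A) u‖ + ‖A u - μ • u‖ := by
            rw [heq]; exact norm_add_le _ _
        _ ≤ ‖T - A‖ * ‖u‖ + c * ε / 4 := add_le_add ((T - A).le_opNorm u) hAu
        _ ≤ c * ε / 2 := by rw [hu1, mul_one]; linarith [hk3]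
    set P := E.orthogonalProjectionOnto with hP
    set w := u - ↑(P u) with hw
    have hwperp : w ∈ Eᗮ := by exact E.sub_starProjection_mem_orthogonal u
    have hsplit : T u - μ • u = (T ↑(P u) - μ • (↑(P u) : H)) + (T w - μ • w) := by
      rw [hw, map_sub, smul_sub]; abel
    have haE : T ↑(P u) - μ • (↑(P u) : H) ∈ E :=
      E.sub_mem (hEinv _ (SetLike.coe_mem _)) (E.smul_mem μ (SetLike.coe_mem _))
    have hbE : T w - μ • w ∈ Eᗮ :=
      Eᗮ.sub_mem (hEperpinv w hwperp) (Eᗮ.smul_mem μ hwperp)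
    have h5 : ‖T w - μ • w‖ ≤ ‖T u - μ • u‖ := by
      rw [hsplit]; exact aux_norm_le_of_orth haE hbE
    have h7 := hboundE w hwperp
    have h8 : Metric.infDist u (E : Set H) ≤ ‖w‖ := by
      have hmem : (↑(P u) : H) ∈ (E : Set H) := SetLike.coe_mem _
      have := Metric.infDist_le_dist_of_mem (x := u) hmem
      rwa [dist_eq_norm] at this
    have h9 : c * Metric.infDist u (E : Set H) ≤ c * (ε / 2) := by
      have : c * Metric.infDist u (E : Set H) ≤ c * ε / 2 := by
        calc c * Metric.infDist u (E : Set H) ≤ c * ‖w‖ :=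
              mul_le_mul_of_nonneg_left h8 hcpos.le
          _ ≤ ‖T w - μ • w‖ := h7
          _ ≤ ‖T u - μ • u‖ := h5
          _ ≤ c * ε / 2 := hTu
      linarith
    exact le_of_mul_le_mul_left h9 hcpos
  -- assemble
  have hg1 : (⨆ u : {u : H // u ∈ (E : Set H) ∧ ‖u‖ = 1},
      Metric.infDist (u : H) (M : Set H)) ≤ ε / 2 :=
    Real.iSup_le (fun u => (hdir1 u u.2.1 u.2.2).trans (by linarith)) (by positivity)
  have hg2 : (⨆ u : {u : H // u ∈ (M : Set H) ∧ ‖u‖ = 1},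
      Metric.infDist (u : H) (E : Set H)) ≤ ε / 2 :=
    Real.iSup_le (fun u => hdir2 u u.2.1 u.2.2) (by positivity)
  have hnn : 0 ≤ subspaceGap (E : Set H) (M : Set H) :=
    le_trans (Real.iSup_nonneg fun u => Metric.infDist_nonneg) (le_max_left _ _)
  rw [Real.dist_eq, sub_zero]
  rw [abs_of_nonneg hnn]
  calc subspaceGap (E : Set H) (M : Set H) ≤ ε / 2 := max_le hg1 hg2
    _ < ε := by linarith
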